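/- Let q = p^r > 3 with p an odd prime, and let t(x) = x + ∑_{k=0}^{q-2} x^k ∈ F_q[x]. The reduced form (degree less than q in each variable) of the polynomial f_2(x_1,x_2) = t(x_1^{q-2} + x_2^{q-2}) ∈ F_q[x_1,x_2] has total degree 2(q-2), and f_2 is a local permutation polynomial. -/

import Mathlib

open MvPolynomial Finset

section LppHelpers

variable {F : Type*} [Field F] [Fintype F] [DecidableEq F]

private lemma sum_pow_card_sub_one' (hq : 3 < Fintype.card F) :
    ∑ x : F, x ^ (Fintype.card F - 1) = -1 := by
  classical
  let φ : Fˣ ↪ F := ⟨fun x ↦ x, fun _ _ h => Units.ext h⟩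
  have huniv : univ.map φ = univ \ {0} := by
    ext x
    simp only [mem_map, mem_univ, Function.Embedding.coeFn_mk, true_and, mem_sdiff,
      mem_singleton, φ]
    exact isUnit_iff_ne_zero
  calc
    ∑ x : F, x ^ (Fintype.card F - 1)
        = ∑ x ∈ univ \ {(0 : F)}, x ^ (Fintype.card F - 1) := by
      rw [← sum_sdiff ({0} : Finset F).subset_univ, sum_singleton,
        zero_pow (by omega), add_zero]
    _ = ∑ x : Fˣ, ((x : F) ^ (Fintype.card F - 1)) := by
      rw [← huniv, univ.sum_map φ]; rfl
    _ = -1 := by rw [FiniteField.sum_pow_units F _, if_pos dvd_rfl]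

private lemma sum_pow_zero' (hq : 3 < Fintype.card F) {m : ℕ} (hm : m ≤ Fintype.card F)
    (hne : m ≠ Fintype.card F - 1) : ∑ x : F, x ^ m = 0 := by
  rcases lt_or_ge m (Fintype.card F - 1) with h | h
  · exact FiniteField.sum_pow_lt_card_sub_one F m h
  · have hm' : m = Fintype.card F := by omega
    subst hm'
    simp_rw [FiniteField.pow_card]
    have := FiniteField.sum_pow_lt_card_sub_one F 1 (by omega)
    simpa using this

private lemma pow_q2 (hq : 3 < Fintype.card F) (a : F) :
    a ^ (Fintype.card F - 2) = a⁻¹ := by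
  by_cases ha : a = 0
  · subst ha; rw [zero_pow (by omega), inv_zero]
  · refine eq_inv_of_mul_eq_one_left ?_
    have : a ^ (Fintype.card F - 2) * a = a ^ (Fintype.card F - 1) := by
      rw [← pow_succ]
      congr 1
      omega
    rw [this, FiniteField.pow_card_sub_one_eq_one a ha]

open MvPolynomial in
private lemma extract_coeff (hq : 3 < Fintype.card F) (f : MvPolynomial (Fin 2) F)
    (hred : ∀ i : Fin 2, f.degreeOf i < Fintype.card F)
    (s t : ℕ) (hs : s ≤ 1) (hts : t ≤ 1) :
    ∑ a : F, ∑ b : F, eval ![a, b] f * a ^ s * b ^ t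
      = f.coeff (Finsupp.single 0 (Fintype.card F - 1 - s)
          + Finsupp.single 1 (Fintype.card F - 1 - t)) := by
  classical
  set q := Fintype.card F with hqdef
  have hd : ∀ d ∈ f.support, d 0 ≤ q - 1 ∧ d 1 ≤ q - 1 := by
    intro d hd
    constructor
    · have := (MvPolynomial.degreeOf_lt_iff (by omega : 0 < q)).mp (hred 0) d hd
      omega
    · have := (MvPolynomial.degreeOf_lt_iff (by omega : 0 < q)).mp (hred 1) d hd
      omega
  have step1 : ∑ a : F, ∑ b : F, eval ![a, b] f * a ^ s * b ^ t
      = ∑ a : F, ∑ b : F, ∑ d ∈ f.support, f.coeff d * a ^ (d 0 + s) * b ^ (d 1 + t) := by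
    refine Finset.sum_congr rfl fun a _ => Finset.sum_congr rfl fun b _ => ?_
    rw [eval_eq', Finset.sum_mul, Finset.sum_mul]
    refine Finset.sum_congr rfl fun d _ => ?_
    simp only [Fin.prod_univ_two, Matrix.cons_val_zero, Matrix.cons_val_one, Matrix.head_cons,
      pow_add]
    ring
  rw [step1]
  have step2 : ∑ a : F, ∑ b : F, ∑ d ∈ f.support, f.coeff d * a ^ (d 0 + s) * b ^ (d 1 + t)
      = ∑ d ∈ f.support, ∑ a : F, ∑ b : F, f.coeff d * a ^ (d 0 + s) * b ^ (d 1 + t) := by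
    have h1 : ∀ a : F, (∑ b : F, ∑ d ∈ f.support, f.coeff d * a ^ (d 0 + s) * b ^ (d 1 + t))
        = ∑ d ∈ f.support, ∑ b : F, f.coeff d * a ^ (d 0 + s) * b ^ (d 1 + t) :=
      fun a => Finset.sum_comm
    simp_rw [h1]
    exact Finset.sum_comm
  rw [step2]
  have inner : ∀ (c : F) (e1 e2 : ℕ),
      (∑ a : F, ∑ b : F, c * a ^ e1 * b ^ e2)
        = c * (∑ a : F, a ^ e1) * (∑ b : F, b ^ e2) := by
    intro c e1 e2
    calc ∑ a : F, ∑ b : F, c * a ^ e1 * b ^ e2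
        = ∑ a : F, (c * a ^ e1) * ∑ b : F, b ^ e2 :=
          Finset.sum_congr rfl fun a _ => by rw [← Finset.mul_sum]
      _ = (∑ a : F, c * a ^ e1) * ∑ b : F, b ^ e2 := by rw [Finset.sum_mul]
      _ = (c * ∑ a : F, a ^ e1) * ∑ b : F, b ^ e2 := by rw [← Finset.mul_sum]
  simp_rw [inner]
  set d₀ : Fin 2 →₀ ℕ := Finsupp.single 0 (q - 1 - s) + Finsupp.single 1 (q - 1 - t) with hd₀
  have hd₀0 : d₀ 0 = q - 1 - s := by simp [hd₀, Finsupp.single_apply]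
  have hd₀1 : d₀ 1 = q - 1 - t := by simp [hd₀, Finsupp.single_apply]
  rw [Finset.sum_eq_single d₀]
  · rw [hd₀0, hd₀1]
    have h0 : q - 1 - s + s = q - 1 := by omega
    have h1 : q - 1 - t + t = q - 1 := by omega
    rw [h0, h1, sum_pow_card_sub_one' hq, mul_neg_one, mul_neg_one, neg_neg]
  · intro d hdm hne
    have hdle := hd d hdm
    have : d 0 + s ≠ q - 1 ∨ d 1 + t ≠ q - 1 := by
      by_contra hcon
      push_neg at hcon
      apply hne
      ext i
      have h0 : d 0 = q - 1 - s := by omega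
      have h1 : d 1 = q - 1 - t := by omega
      fin_cases i
      · show d 0 = d₀ 0
        rw [hd₀0]; exact h0
      · show d 1 = d₀ 1
        rw [hd₀1]; exact h1
    rcases this with h | h
    · rw [sum_pow_zero' hq (by omega) h, mul_zero, zero_mul]
    · rw [sum_pow_zero' hq (by omega) h, mul_zero]
  · intro hnm
    rw [MvPolynomial.notMem_support_iff.mp hnm, zero_mul, zero_mul]

private lemma sum_id_zero' (hq : 3 < Fintype.card F) : ∑ a : F, a = 0 := by
  simpa using FiniteField.sum_pow_lt_card_sub_one F 1 (by omega)

private lemma sum_inv_zero' (hq : 3 < Fintype.card F) : ∑ a : F, a⁻¹ = 0 := by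
  simp_rw [← pow_q2 hq]
  exact FiniteField.sum_pow_lt_card_sub_one F _ (by omega)

private lemma tval (hq : 3 < Fintype.card F) (S : F) :
    Polynomial.eval S (Polynomial.X + ∑ k ∈ Finset.range (Fintype.card F - 1), Polynomial.X ^ k)
      = S + (if S = 0 then 1 else 0) - (if S = 1 then 1 else 0) := by
  rw [Polynomial.eval_add, Polynomial.eval_X, Polynomial.eval_finset_sum]
  simp_rw [Polynomial.eval_pow, Polynomial.eval_X]
  by_cases h0 : S = 0
  · subst h0
    rw [if_pos rfl, if_neg zero_ne_one, sub_zero]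
    congr 1
    simp_rw [zero_pow_eq]
    rw [Finset.sum_ite_eq' (Finset.range (Fintype.card F - 1)) 0 (fun _ => (1 : F)),
      if_pos (Finset.mem_range.mpr (by omega))]
  · by_cases h1 : S = 1
    · subst h1
      rw [if_neg (one_ne_zero), if_pos rfl]
      simp only [one_pow, Finset.sum_const, Finset.card_range, nsmul_eq_mul, mul_one]
      rw [Nat.cast_sub (by omega : 1 ≤ Fintype.card F), FiniteField.cast_card_eq_zero,
        Nat.cast_one, zero_sub]
      ring
    · rw [if_neg h0, if_neg h1, geom_sum_eq h1,
        FiniteField.pow_card_sub_one_eq_one S h0]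
      simp

private lemma Mlin' (hq : 3 < Fintype.card F) (s t : ℕ) (hs : s ≤ 1) (ht : t ≤ 1) :
    ∑ a : F, ∑ b : F, (a⁻¹ + b⁻¹) * a ^ s * b ^ t = 0 := by
  have key : ∀ a b : F, (a⁻¹ + b⁻¹) * a ^ s * b ^ t
      = a ^ (Fintype.card F - 2 + s) * b ^ t + a ^ s * b ^ (Fintype.card F - 2 + t) := by
    intro a b
    rw [← pow_q2 hq a, ← pow_q2 hq b, pow_add, pow_add]
    ring
  simp_rw [key, Finset.sum_add_distrib, ← Finset.sum_mul_sum]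
  rw [FiniteField.sum_pow_lt_card_sub_one F t (by omega),
    FiniteField.sum_pow_lt_card_sub_one F s (by omega), mul_zero, zero_mul, add_zero]

private lemma M0' (hq : 3 < Fintype.card F) (s t : ℕ) (hs : s ≤ 1) (ht : t ≤ 1) :
    ∑ a : F, ∑ b : F, (if a⁻¹ + b⁻¹ = 0 then (1 : F) else 0) * a ^ s * b ^ t = 0 := by
  have hcond : ∀ a b : F, (a⁻¹ + b⁻¹ = 0) ↔ b = -a := by
    intro a b
    rw [add_comm, add_eq_zero_iff_eq_neg, ← inv_neg, inv_inj]
  simp_rw [hcond, ite_mul, one_mul, zero_mul]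
  have hinner : ∀ a : F, ∑ b : F, (if b = -a then a ^ s * b ^ t else 0)
      = a ^ s * (-a) ^ t :=
    fun a => by rw [Finset.sum_ite_eq' Finset.univ (-a) (fun b => a ^ s * b ^ t),
      if_pos (Finset.mem_univ _)]
  simp_rw [hinner]
  have hterm : ∀ a : F, a ^ s * (-a) ^ t = (-1) ^ t * a ^ (s + t) := by
    intro a
    rw [neg_pow, pow_add]
    ring
  simp_rw [hterm, ← Finset.mul_sum]
  rw [FiniteField.sum_pow_lt_card_sub_one F (s + t) (by omega), mul_zero]

private lemma Tsum' (hq : 3 < Fintype.card F) : ∑ a : F, a * (1 - a⁻¹)⁻¹ = -2 := by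
  classical
  have hsplit := Finset.sum_sdiff (f := fun a : F => a * (1 - a⁻¹)⁻¹)
    (Finset.subset_univ ({0, 1} : Finset F))
  have h01 : ∑ a ∈ ({0, 1} : Finset F), a * (1 - a⁻¹)⁻¹ = 0 := by
    rw [Finset.sum_pair zero_ne_one]
    simp
  have hU : ∑ a ∈ Finset.univ \ ({0, 1} : Finset F), a * (1 - a⁻¹)⁻¹
      = ∑ a ∈ Finset.univ \ ({0, 1} : Finset F), ((a + 1) + (a - 1)⁻¹) := by
    refine Finset.sum_congr rfl fun a ha => ?_
    rw [Finset.mem_sdiff, Finset.mem_insert, Finset.mem_singleton] at ha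
    have ha0 : a ≠ 0 := fun h => ha.2 (Or.inl h)
    have ha1 : a - 1 ≠ 0 := fun h => ha.2 (Or.inr (by
      have := sub_eq_zero.mp h
      exact this))
    have h2 : 1 - a⁻¹ = (a - 1) * a⁻¹ := by
      field_simp
    rw [h2, mul_inv, inv_inv]
    field_simp
    ring
  have hUa : ∑ a ∈ Finset.univ \ ({0, 1} : Finset F), (a + 1) = -3 := by
    have h := Finset.sum_sdiff (f := fun a : F => a + 1)
      (Finset.subset_univ ({0, 1} : Finset F))
    have huniv : ∑ a : F, (a + 1) = 0 := by
      rw [Finset.sum_add_distrib, sum_id_zero' hq, Finset.sum_const, Finset.card_univ,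
        nsmul_eq_mul, mul_one, FiniteField.cast_card_eq_zero, add_zero]
    have hp : ∑ a ∈ ({0, 1} : Finset F), (a + 1) = 3 := by
      rw [Finset.sum_pair zero_ne_one]
      norm_num
    rw [huniv, hp] at h
    linear_combination h
  have hUb : ∑ a ∈ Finset.univ \ ({0, 1} : Finset F), (a - 1)⁻¹ = 1 := by
    have h := Finset.sum_sdiff (f := fun a : F => (a - 1)⁻¹)
      (Finset.subset_univ ({0, 1} : Finset F))
    have huniv : ∑ a : F, (a - 1)⁻¹ = 0 := by
      rw [Fintype.sum_equiv (Equiv.subRight (1 : F)) (fun a : F => (a - 1)⁻¹)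
        (fun b : F => b⁻¹) (fun a => rfl)]
      exact sum_inv_zero' hq
    have hp : ∑ a ∈ ({0, 1} : Finset F), (a - 1)⁻¹ = -1 := by
      rw [Finset.sum_pair zero_ne_one]
      norm_num
    rw [huniv, hp] at h
    linear_combination h
  rw [← hsplit, h01, hU, Finset.sum_add_distrib, hUa, hUb]
  ring

private lemma M1' (hq : 3 < Fintype.card F) (s t : ℕ) (hs : s ≤ 1) (ht : t ≤ 1) :
    ∑ a : F, ∑ b : F, (if a⁻¹ + b⁻¹ = 1 then (1 : F) else 0) * a ^ s * b ^ t
      = if s = 1 ∧ t = 1 then -2 else 0 := by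
  have hcond : ∀ a b : F, (a⁻¹ + b⁻¹ = 1) ↔ b = (1 - a⁻¹)⁻¹ := by
    intro a b
    constructor
    · intro h
      have hb : b⁻¹ = 1 - a⁻¹ := by linear_combination h
      rw [← inv_inv b, hb]
    · intro h
      subst h
      rw [inv_inv]
      ring
  simp_rw [hcond, ite_mul, one_mul, zero_mul]
  have hinner : ∀ a : F, ∑ b : F, (if b = (1 - a⁻¹)⁻¹ then a ^ s * b ^ t else 0)
      = a ^ s * ((1 - a⁻¹)⁻¹) ^ t :=
    fun a => by rw [Finset.sum_ite_eq' Finset.univ _ (fun b => a ^ s * b ^ t),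
      if_pos (Finset.mem_univ _)]
  simp_rw [hinner]
  have hβ : Function.Bijective fun a : F => (1 - a⁻¹)⁻¹ := by
    have h1 : Function.Bijective fun a : F => a⁻¹ :=
      Function.Involutive.bijective fun a => inv_inv a
    have h2 : Function.Bijective fun a : F => 1 - a :=
      Function.Involutive.bijective fun a => by ring
    exact h1.comp (h2.comp h1)
  interval_cases s <;> interval_cases t <;> simp only [pow_zero, pow_one, one_mul, mul_one]
  · simp [Finset.card_univ, FiniteField.cast_card_eq_zero]
  · have h := hβ.sum_comp (id : F → F)
    simp only [id] at h
    rw [h, sum_id_zero' hq]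
    simp
  · simp [sum_id_zero' hq]
  · simpa using Tsum' hq

end LppHelpers

/-- For `q = p^r > 3` with `p` an odd prime and `t(x) = x + ∑_{k=0}^{q-2} x^k`, the
reduced form `f₂` of `t(x₁^{q-2} + x₂^{q-2})` has total degree `2(q-2)` and is a local
permutation polynomial.  Here `f₂` is characterised as the polynomial with degree `< q`
in each variable inducing the same function as `t(x₁^{q-2} + x₂^{q-2})`. -/
theorem lpp_two_vars_max_degree {p r : ℕ} (hp : p.Prime) (hodd : p ≠ 2) (hr : 0 < r)
    {F : Type*} [Field F] [Fintype F] [DecidableEq F]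
    (hF : Fintype.card F = p ^ r) (hq : 3 < Fintype.card F)
    (t : Polynomial F)
    (ht : t = Polynomial.X + ∑ k ∈ Finset.range (Fintype.card F - 1), Polynomial.X ^ k)
    (f₂ : MvPolynomial (Fin 2) F)
    (hred : ∀ i : Fin 2, f₂.degreeOf i < Fintype.card F)
    (heq : ∀ x : Fin 2 → F, eval x f₂ =
      Polynomial.eval ((x 0) ^ (Fintype.card F - 2) + (x 1) ^ (Fintype.card F - 2)) t) :
    f₂.totalDegree = 2 * (Fintype.card F - 2) ∧
    (∀ (i : Fin 2) (x : Fin 2 → F),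
      Function.Bijective fun c : F => eval (Function.update x i c) f₂) := by
  classical
  set q := Fintype.card F with hqdef
  -- characteristic facts
  have h2ne : (2 : F) ≠ 0 := by
    intro h2
    obtain ⟨n, hcp, hcard⟩ := FiniteField.card F (ringChar F)
    have hpc : p = ringChar F := by
      have hdvd : p ∣ ringChar F ^ (n : ℕ) := by
        rw [← hcard, ← hqdef, hF]
        exact dvd_pow_self p (by omega)
      exact (Nat.prime_dvd_prime_iff_eq hp hcp).mp (hp.dvd_of_dvd_pow hdvd)
    have hdvd2 : ringChar F ∣ 2 := (CharP.cast_eq_zero_iff F (ringChar F) 2).mp (by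
      simpa using h2)
    have : ringChar F = 2 := (Nat.prime_dvd_prime_iff_eq hcp Nat.prime_two).mp hdvd2
    exact hodd (hpc.trans this)
  -- coefficient computation
  have hM : ∀ s t' : ℕ, s ≤ 1 → t' ≤ 1 →
      f₂.coeff (Finsupp.single 0 (q - 1 - s) + Finsupp.single 1 (q - 1 - t'))
        = if s = 1 ∧ t' = 1 then 2 else 0 := by
    intro s t' hs hts
    rw [← extract_coeff hq f₂ hred s t' hs hts]
    have hterm : ∀ a b : F, eval ![a, b] f₂ * a ^ s * b ^ t'
        = (a⁻¹ + b⁻¹) * a ^ s * b ^ t'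
          + (if a⁻¹ + b⁻¹ = 0 then (1 : F) else 0) * a ^ s * b ^ t'
          - (if a⁻¹ + b⁻¹ = 1 then (1 : F) else 0) * a ^ s * b ^ t' := by
      intro a b
      rw [heq ![a, b]]
      simp only [Matrix.cons_val_zero, Matrix.cons_val_one, Matrix.head_cons]
      rw [pow_q2 hq a, pow_q2 hq b, ht, tval hq]
      ring
    simp_rw [hterm, Finset.sum_sub_distrib, Finset.sum_add_distrib]
    rw [Mlin' hq s t' hs hts, M0' hq s t' hs hts, M1' hq s t' hs hts]
    by_cases hcase : s = 1 ∧ t' = 1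
    · rw [if_pos hcase, if_pos hcase]; ring
    · rw [if_neg hcase, if_neg hcase]; ring
  constructor
  · -- total degree
    have harith : q - 1 - 1 = q - 2 := by omega
    have hd22 : f₂.coeff (Finsupp.single 0 (q - 2) + Finsupp.single 1 (q - 2)) = 2 := by
      have h := hM 1 1 le_rfl le_rfl
      rw [if_pos ⟨rfl, rfl⟩, harith] at h
      exact h
    have hmem : (Finsupp.single 0 (q - 2) + Finsupp.single 1 (q - 2) : Fin 2 →₀ ℕ)
        ∈ f₂.support := MvPolynomial.mem_support_iff.mpr (by rw [hd22]; exact h2ne)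
    have hsum22 : ((Finsupp.single 0 (q - 2) + Finsupp.single 1 (q - 2) : Fin 2 →₀ ℕ).sum
        fun _ e => e) = 2 * (q - 2) := by
      rw [Finsupp.sum_fintype _ _ (fun _ => rfl), Fin.sum_univ_two]
      simp [Finsupp.single_apply]
      omega
    have hge : 2 * (q - 2) ≤ f₂.totalDegree := by
      have := MvPolynomial.le_totalDegree hmem
      rwa [hsum22] at this
    have hle : f₂.totalDegree ≤ 2 * (q - 2) := by
      rw [MvPolynomial.totalDegree]
      apply Finset.sup_le
      intro d hd
      have h0 : d 0 < q := (MvPolynomial.degreeOf_lt_iff (by omega : 0 < q)).mp (hred 0) d hd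
      have h1 : d 1 < q := (MvPolynomial.degreeOf_lt_iff (by omega : 0 < q)).mp (hred 1) d hd
      have hsumd : (d.sum fun _ e => e) = d 0 + d 1 := by
        rw [Finsupp.sum_fintype _ _ (fun _ => rfl), Fin.sum_univ_two]
      rw [hsumd]
      by_contra hcon
      push_neg at hcon
      set s := q - 1 - d 0 with hsdef
      set t' := q - 1 - d 1 with htdef
      have hs : s ≤ 1 := by omega
      have hts : t' ≤ 1 := by omega
      have hdm : d = Finsupp.single 0 (q - 1 - s) + Finsupp.single 1 (q - 1 - t') := by
        ext i
        fin_cases i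
        · show d 0 = (Finsupp.single 0 (q - 1 - s) + Finsupp.single 1 (q - 1 - t')
            : Fin 2 →₀ ℕ) 0
          simp [Finsupp.single_apply]
          omega
        · show d 1 = (Finsupp.single 0 (q - 1 - s) + Finsupp.single 1 (q - 1 - t')
            : Fin 2 →₀ ℕ) 1
          simp [Finsupp.single_apply]
          omega
      have hsupp := MvPolynomial.mem_support_iff.mp hd
      rw [hdm, hM s t' hs hts] at hsupp
      have hcf : ¬(s = 1 ∧ t' = 1) := by omega
      rw [if_neg hcf] at hsupp
      exact hsupp rfl
    omega
  · -- local permutation property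
    intro i x
    have hinvb : Function.Bijective fun c : F => c⁻¹ :=
      Function.Involutive.bijective fun a => inv_inv a
    have hτ : Function.Involutive
        (fun S : F => S + (if S = 0 then 1 else 0) - (if S = 1 then 1 else 0)) := by
      intro s
      by_cases h0 : s = 0
      · subst h0; norm_num
      · by_cases h1 : s = 1
        · subst h1; norm_num
        · simp [h0, h1]
    fin_cases i
    · have hf : (fun c : F => eval (Function.update x 0 c) f₂)
          = (fun S : F => S + (if S = 0 then 1 else 0) - (if S = 1 then 1 else 0))
            ∘ ((fun v : F => v + (x 1)⁻¹) ∘ (fun c : F => c⁻¹)) := by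
        funext c
        simp only [Function.comp]
        rw [heq, ht, Function.update_self,
          Function.update_of_ne (by decide : (1 : Fin 2) ≠ 0), tval hq,
          pow_q2 hq, pow_q2 hq]
      rw [show (fun c : F => eval (Function.update x ⟨0, by omega⟩ c) f₂)
          = fun c : F => eval (Function.update x 0 c) f₂ from rfl, hf]
      exact hτ.bijective.comp (((Equiv.addRight ((x 1)⁻¹)).bijective).comp hinvb)
    · have hf : (fun c : F => eval (Function.update x 1 c) f₂)
          = (fun S : F => S + (if S = 0 then 1 else 0) - (if S = 1 then 1 else 0))
            ∘ ((fun v : F => (x 0)⁻¹ + v) ∘ (fun c : F => c⁻¹)) := by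
        funext c
        simp only [Function.comp]
        rw [heq, ht, Function.update_self,
          Function.update_of_ne (by decide : (0 : Fin 2) ≠ 1), tval hq,
          pow_q2 hq, pow_q2 hq]
      rw [show (fun c : F => eval (Function.update x ⟨1, by omega⟩ c) f₂)
          = fun c : F => eval (Function.update x 1 c) f₂ from rfl, hf]
      exact hτ.bijective.comp (((Equiv.addLeft ((x 0)⁻¹)).bijective).comp hinvb)
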